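/- If ℓ, ℓ' ∈ ℂ are not odd integers and there exists a linear bijection Φ: V(ℓ') → V(ℓ) with Φ∘A' = A∘Φ and Φ∘B' = B∘Φ, then ℓ' - ℓ is an even integer. -/

import Mathlib

/-- The shift operator `A` on the space `V(ℓ) = ℤ →₀ K`, `A eₖ = eₖ₊₁`. -/
noncomputable def aslA (K : Type*) [Field K] : Module.End K (ℤ →₀ K) :=
  Finsupp.lsum K fun k => (LinearMap.id : K →ₗ[K] K).smulRight (Finsupp.single (k + 1) (1 : K))

/-- The operator `B` on `V(ℓ)`, `B eₖ = ((1-ℓ)/2 - ⌊k/2⌋) eₖ₋₁`. -/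
noncomputable def aslB (K : Type*) [Field K] (ℓ : K) : Module.End K (ℤ →₀ K) :=
  Finsupp.lsum K fun k => (LinearMap.id : K →ₗ[K] K).smulRight
    ((((1 : K) - ℓ) / 2 - ((Int.fdiv k 2 : ℤ) : K)) • Finsupp.single (k - 1) (1 : K))

lemma aslA_single (K : Type*) [Field K] (k : ℤ) (c : K) :
    aslA K (Finsupp.single k c) = Finsupp.single (k + 1) c := by
  rw [aslA]
  rw [Finsupp.lsum_single]
  simp only [LinearMap.smulRight_apply, LinearMap.id_apply, Finsupp.smul_single, smul_eq_mul,
    mul_one]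

lemma aslB_single (K : Type*) [Field K] (ℓ : K) (k : ℤ) (c : K) :
    aslB K ℓ (Finsupp.single k c)
      = Finsupp.single (k - 1) ((((1 : K) - ℓ) / 2 - ((Int.fdiv k 2 : ℤ) : K)) * c) := by
  rw [aslB]
  rw [Finsupp.lsum_single]
  simp only [LinearMap.smulRight_apply, LinearMap.id_apply, smul_smul, Finsupp.smul_single,
    smul_eq_mul, mul_one, mul_comm c]

lemma BA_apply (K : Type*) [Field K] (ℓ : K) (v : ℤ →₀ K) (j : ℤ) :
    (aslB K ℓ (aslA K v)) j
      = (((1 : K) - ℓ) / 2 - ((Int.fdiv (j + 1) 2 : ℤ) : K)) * v j := by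
  induction v using Finsupp.induction_linear with
  | zero => simp
  | add f g hf hg => simp [map_add, Finsupp.add_apply, hf, hg, mul_add]
  | single k c =>
    rw [aslA_single, aslB_single]
    simp only [add_sub_cancel_right, Finsupp.single_apply]
    split_ifs with h
    · subst h; ring
    · ring

theorem stmt_15 (ℓ ℓ' : ℂ)
    (hℓ : ¬ ∃ n : ℤ, ℓ = 2 * (n : ℂ) + 1) (hℓ' : ¬ ∃ n : ℤ, ℓ' = 2 * (n : ℂ) + 1)
    (Φ : (ℤ →₀ ℂ) →ₗ[ℂ] (ℤ →₀ ℂ)) (hbij : Function.Bijective Φ)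
    (hA : Φ ∘ₗ aslA ℂ = aslA ℂ ∘ₗ Φ)
    (hB : Φ ∘ₗ aslB ℂ ℓ' = aslB ℂ ℓ ∘ₗ Φ) :
    ∃ m : ℤ, ℓ' - ℓ = 2 * (m : ℂ) := by
  set v : ℤ →₀ ℂ := Φ (Finsupp.single 0 1) with hv
  have hv0 : v ≠ 0 := by
    intro h
    have h1 : Φ (Finsupp.single 0 (1 : ℂ)) = Φ 0 := by rw [map_zero, ← hv, h]
    have := hbij.injective h1
    simpa using Finsupp.single_eq_zero.mp this
  -- key equation: BA v = ((1-ℓ')/2) • v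
  have key : aslB ℂ ℓ (aslA ℂ v) = (((1 : ℂ) - ℓ') / 2) • v := by
    have h1 : Φ (aslA ℂ (Finsupp.single 0 1)) = aslA ℂ v := by
      have := LinearMap.congr_fun hA (Finsupp.single 0 1)
      simpa [hv] using this
    have h2 : Φ (aslB ℂ ℓ' (aslA ℂ (Finsupp.single 0 1))) = aslB ℂ ℓ (aslA ℂ v) := by
      have := LinearMap.congr_fun hB (aslA ℂ (Finsupp.single 0 1))
      simp only [LinearMap.comp_apply] at this
      rw [this, h1]
    rw [← h2, aslA_single, aslB_single]
    have : Int.fdiv (0 + 1) 2 = 0 := by decide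
    rw [this]
    simp only [Int.cast_zero, sub_zero, add_sub_cancel_right, mul_one]
    rw [show Finsupp.single (0:ℤ) (((1:ℂ) - ℓ') / 2)
        = (((1:ℂ) - ℓ') / 2) • Finsupp.single (0:ℤ) (1:ℂ) by
      rw [Finsupp.smul_single, smul_eq_mul, mul_one]]
    rw [map_smul, ← hv]
  obtain ⟨j, hj⟩ := Finsupp.ne_iff.mp hv0
  simp only [Finsupp.coe_zero, Pi.zero_apply] at hj
  have hkey := congrArg (fun w => w j) key
  simp only [Finsupp.smul_apply, smul_eq_mul] at hkey
  rw [BA_apply] at hkey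
  have heq : ((1 : ℂ) - ℓ) / 2 - ((Int.fdiv (j + 1) 2 : ℤ) : ℂ) = ((1 : ℂ) - ℓ') / 2 :=
    mul_right_cancel₀ hj hkey
  refine ⟨Int.fdiv (j + 1) 2, ?_⟩
  field_simp at heq
  linear_combination heq
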